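/- Let H ∈ (0,1/2), γ ∈ (0,1), T ∈ (0,∞), and define for 0 ≤ s ≤ t ≤ T the function V_Z(s,t) = ((1−γ) t^{2H} + (γ²−γ) s^{2H} + γ (t−s)^{2H})^{1/2}. Then, as (s,t) → (0,T) within {0 ≤ s ≤ t ≤ T}, V_Z(s,t) = T^H ( 1 − H T^{−1} (T−t) − ((γ−γ²)/2) T^{−2H} s^{2H} ) + o( (T−t) + s^{2H} ); that is, [V_Z(s,t) − T^H(1 − H T^{−1}(T−t) − ((γ−γ²)/2) T^{−2H} s^{2H})] / ((T−t) + s^{2H}) → 0 as (s,t) → (0,T) with (s,t) ≠ (0,T). -/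

import Mathlib

open Filter Set Real
open scoped Topology

/-- The standard deviation function `V_Z(s,t)` of the Gaussian field
`Z(s,t) = X_H(t) − γ X_H(s)`. -/
noncomputable def VZ (H γ s t : ℝ) : ℝ :=
  ((1 - γ) * t ^ (2*H) + (γ^2 - γ) * s ^ (2*H) + γ * (t - s) ^ (2*H)) ^ ((1:ℝ)/2)

/-- Expansion (3.8), case `H < 1/2`: as `(s,t) → (0,T)` within `{0 ≤ s ≤ t ≤ T}`,
`V_Z(s,t) = T^H (1 − H T⁻¹ (T−t) − ((γ−γ²)/2) T^{−2H} s^{2H}) + o((T−t) + s^{2H})`. -/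
theorem VZ_expansion_small_H (H γ T : ℝ)
    (hH : H ∈ Set.Ioo (0:ℝ) (1/2)) (hγ : γ ∈ Set.Ioo (0:ℝ) 1) (hT : 0 < T) :
    Filter.Tendsto (fun p : ℝ × ℝ =>
      (VZ H γ p.1 p.2
        - T ^ H * (1 - H * T⁻¹ * (T - p.2) - ((γ - γ^2)/2) * T ^ (-(2*H)) * p.1 ^ (2*H)))
        / ((T - p.2) + p.1 ^ (2*H)))
      (nhdsWithin ((0:ℝ), T)
        ({p : ℝ × ℝ | 0 ≤ p.1 ∧ p.1 ≤ p.2 ∧ p.2 ≤ T} \ {((0:ℝ), T)}))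
      (nhds 0) := by
  obtain ⟨hH0, hH2⟩ := hH
  obtain ⟨hγ0, hγ1⟩ := hγ
  have h2H : 0 < 2*H := by linarith
  have h2H1 : 2*H < 1 := by linarith
  have hTne : T ≠ 0 := hT.ne'
  set l := nhdsWithin ((0:ℝ), T)
      ({p : ℝ × ℝ | 0 ≤ p.1 ∧ p.1 ≤ p.2 ∧ p.2 ≤ T} \ {((0:ℝ), T)}) with hldef
  have hPpos : 0 < T ^ (2*H) := Real.rpow_pos_of_pos hT _
  have hXpos : 0 < T ^ H := Real.rpow_pos_of_pos hT _
  -- local abbreviations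
  set F : ℝ × ℝ → ℝ := fun p =>
    (1 - γ) * p.2 ^ (2*H) + (γ^2 - γ) * p.1 ^ (2*H) + γ * (p.2 - p.1) ^ (2*H) with hFdef
  set L : ℝ × ℝ → ℝ := fun p =>
    T ^ H * (1 - H * T⁻¹ * (T - p.2) - ((γ - γ^2)/2) * T ^ (-(2*H)) * p.1 ^ (2*H)) with hLdef
  set w : ℝ × ℝ → ℝ := fun p => (T - p.2) + p.1 ^ (2*H) with hwdef
  set A : ℝ × ℝ → ℝ := fun p =>
    p.2 ^ (2*H) - T ^ (2*H) - (p.2 - T) * (2*H * T ^ (2*H-1)) with hAdef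
  set C : ℝ × ℝ → ℝ := fun p => (p.2 - p.1) ^ (2*H) - p.2 ^ (2*H) with hCdef
  set Q : ℝ × ℝ → ℝ := fun p =>
    (H * T⁻¹ * (T - p.2) + ((γ - γ^2)/2) * T ^ (-(2*H)) * p.1 ^ (2*H))^2 with hQdef
  -- power relations
  have hsq : T ^ H * T ^ H = T ^ (2*H) := by
    rw [← Real.rpow_add hT]; congr 1; ring
  have hneg : T ^ (-(2*H)) = (T ^ (2*H))⁻¹ := Real.rpow_neg hT.le _
  have hsub : T ^ (2*H-1) = T ^ (2*H) * T⁻¹ := by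
    rw [Real.rpow_sub hT, Real.rpow_one, div_eq_mul_inv]
  -- the key algebraic identity
  have hid : ∀ p : ℝ × ℝ, F p - (L p)^2 = A p + γ * C p - T ^ (2*H) * Q p := by
    intro p
    have hLsq : (L p)^2 = T ^ (2*H) *
        (1 - H * T⁻¹ * (T - p.2) - ((γ - γ^2)/2) * (T ^ (2*H))⁻¹ * p.1 ^ (2*H))^2 := by
      simp only [hLdef, hneg]; rw [mul_pow, ← hsq]; ring
    rw [hLsq]
    simp only [hFdef, hAdef, hCdef, hQdef, hneg, hsub]
    field_simp
    ring
  -- basic limits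
  have hs : Tendsto (fun p : ℝ × ℝ => p.1) l (𝓝 0) :=
    (Continuous.tendsto continuous_fst ((0:ℝ), T)).mono_left nhdsWithin_le_nhds
  have ht : Tendsto (fun p : ℝ × ℝ => p.2) l (𝓝 T) :=
    (Continuous.tendsto continuous_snd ((0:ℝ), T)).mono_left nhdsWithin_le_nhds
  have hts : Tendsto (fun p : ℝ × ℝ => p.2 - p.1) l (𝓝 T) := by
    simpa using ht.sub hs
  have hv : Tendsto (fun p : ℝ × ℝ => p.1 ^ (2*H)) l (𝓝 0) := by
    have := (Real.continuousAt_rpow_const 0 (2*H) (Or.inr h2H.le)).tendsto.comp hs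
    simpa [Function.comp_def, Real.zero_rpow h2H.ne'] using this
  have hu : Tendsto (fun p : ℝ × ℝ => T - p.2) l (𝓝 0) := by
    have := ht.const_sub T
    simpa using this
  have hw0 : Tendsto w l (𝓝 0) := by
    simpa [hwdef] using hu.add hv
  have hta : Tendsto (fun p : ℝ × ℝ => p.2 ^ (2*H)) l (𝓝 (T ^ (2*H))) :=
    ((Real.continuousAt_rpow_const T (2*H) (Or.inl hTne)).tendsto.comp ht :)
  have htc : Tendsto (fun p : ℝ × ℝ => (p.2 - p.1) ^ (2*H)) l (𝓝 (T ^ (2*H))) :=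
    ((Real.continuousAt_rpow_const T (2*H) (Or.inl hTne)).tendsto.comp hts :)
  have hF : Tendsto F l (𝓝 (T ^ (2*H))) := by
    have h0 : Tendsto F l (𝓝 ((1-γ) * T^(2*H) + (γ^2-γ) * 0 + γ * T^(2*H))) :=
      ((hta.const_mul (1-γ)).add (hv.const_mul (γ^2-γ))).add (htc.const_mul γ)
    have : (1-γ) * T^(2*H) + (γ^2-γ) * 0 + γ * T^(2*H) = T^(2*H) := by ring
    rwa [this] at h0
  have hVZ : Tendsto (fun p : ℝ × ℝ => VZ H γ p.1 p.2) l (𝓝 (T ^ H)) := by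
    have hc := (Real.continuousAt_rpow_const (T^(2*H)) ((1:ℝ)/2) (Or.inl hPpos.ne')).tendsto.comp hF
    have hval : (T ^ (2*H)) ^ ((1:ℝ)/2) = T ^ H := by
      rw [← Real.rpow_mul hT.le]; congr 1; ring
    rw [hval] at hc
    exact hc.congr (fun p => rfl)
  have hL : Tendsto L l (𝓝 (T ^ H)) := by
    have h0 : Tendsto L l (𝓝 (T^H * (1 - H * T⁻¹ * 0 - ((γ - γ^2)/2) * T ^ (-(2*H)) * 0))) :=
      ((tendsto_const_nhds.sub (hu.const_mul (H * T⁻¹))).sub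
        (hv.const_mul (((γ - γ^2)/2) * T ^ (-(2*H))))).const_mul (T^H)
    have : T^H * (1 - H * T⁻¹ * 0 - ((γ - γ^2)/2) * T ^ (-(2*H)) * 0) = T^H := by ring
    rwa [this] at h0
  have hden : Tendsto (fun p : ℝ × ℝ => VZ H γ p.1 p.2 + L p) l (𝓝 (T^H + T^H)) := hVZ.add hL
  -- eventual facts
  have hmem : ∀ᶠ p in l, p ∈ ({p : ℝ × ℝ | 0 ≤ p.1 ∧ p.1 ≤ p.2 ∧ p.2 ≤ T} \ {((0:ℝ), T)}) :=
    eventually_mem_nhdsWithin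
  have hwpos : ∀ᶠ p in l, 0 < w p := by
    filter_upwards [hmem] with p hp
    obtain ⟨⟨hs0, hst, htT⟩, hne⟩ := hp
    have hu0 : 0 ≤ T - p.2 := by linarith
    have hv0 : 0 ≤ p.1 ^ (2*H) := Real.rpow_nonneg hs0 _
    rcases (add_nonneg hu0 hv0).lt_or_eq with h | h
    · exact h
    · exfalso
      have h1 : T - p.2 = 0 := by linarith [hv0, hu0, h.symm ▸ (le_refl (0:ℝ))]
      have h2 : p.1 ^ (2*H) = 0 := by linarith
      have hp1 : p.1 = 0 := by
        rcases (Real.rpow_eq_zero_iff_of_nonneg hs0).mp h2 with ⟨h', _⟩; exact h'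
      exact hne (by simp [Prod.ext_iff, hp1]; linarith)
  -- term A : little-o from differentiability
  have hA : Tendsto (fun p => A p / w p) l (𝓝 0) := by
    rw [NormedAddCommGroup.tendsto_nhds_zero]
    intro ε hε
    have hd : HasDerivAt (fun x : ℝ => x ^ (2*H)) (2*H * T^(2*H-1)) T :=
      Real.hasDerivAt_rpow_const (Or.inl hTne)
    have hlo := hasDerivAt_iff_isLittleO.mp hd
    have hev := ht.eventually (hlo.def (show 0 < ε/2 by linarith))
    filter_upwards [hev, hmem, hwpos] with p h1 h2 hw
    obtain ⟨⟨hs0, hst, htT⟩, _⟩ := h2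
    have hv0 : 0 ≤ p.1 ^ (2*H) := Real.rpow_nonneg hs0 _
    have huw : T - p.2 ≤ w p := le_add_of_nonneg_right hv0
    have hAb : |A p| ≤ ε/2 * (T - p.2) := by
      have : ‖p.2 ^ (2*H) - T ^ (2*H) - (p.2 - T) • (2*H * T^(2*H-1))‖ ≤ ε/2 * ‖p.2 - T‖ := h1
      rw [Real.norm_eq_abs, Real.norm_eq_abs, smul_eq_mul] at this
      have habs : |p.2 - T| = T - p.2 := by rw [abs_sub_comm]; exact abs_of_nonneg (by linarith)
      rw [habs] at this
      exact this
    have : ‖A p / w p‖ = |A p| / w p := by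
      rw [Real.norm_eq_abs, abs_div, abs_of_pos hw]
    rw [this]
    calc |A p| / w p ≤ (ε/2 * (T - p.2)) / w p := by gcongr
      _ ≤ (ε/2 * w p) / w p := by gcongr <;> linarith
      _ = ε/2 := by rw [mul_div_assoc, div_self hw.ne', mul_one]
      _ < ε := by linarith
  -- term C : mean value estimate
  have hC : Tendsto (fun p => C p / w p) l (𝓝 0) := by
    set K : ℝ := 2*H * (T/2) ^ (2*H-1) with hKdef
    have hK0 : 0 ≤ K := by positivity
    apply squeeze_zero_norm' (a := fun p : ℝ × ℝ => K * p.1 ^ (1 - 2*H))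
    · -- eventual bound
      have hs4 : ∀ᶠ p in l, p.1 < T/4 := hs.eventually_lt_const (by linarith)
      have ht4 : ∀ᶠ p in l, 3*T/4 < p.2 := ht.eventually_const_lt (by linarith)
      filter_upwards [hmem, hwpos, hs4, ht4] with p hp hw h4 h34
      obtain ⟨⟨hs0, hst, htT⟩, _⟩ := hp
      have hts2 : T/2 ≤ p.2 - p.1 := by linarith
      have htsp : 0 < p.2 - p.1 := by linarith
      have hCb : ‖C p‖ ≤ K * p.1 := by
        have hmvt : ∀ x ∈ Set.Icc (p.2 - p.1) p.2,
            HasDerivWithinAt (fun x : ℝ => x ^ (2*H)) (2*H * x^(2*H-1))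
              (Set.Icc (p.2 - p.1) p.2) x := by
          intro x hx
          have hx0 : x ≠ 0 := by have := hx.1; intro h; rw [h] at this; linarith
          exact (Real.hasDerivAt_rpow_const (Or.inl hx0)).hasDerivWithinAt
        have hbound : ∀ x ∈ Set.Ico (p.2 - p.1) p.2, ‖2*H * x^(2*H-1)‖ ≤ K := by
          intro x hx
          have hx2 : T/2 ≤ x := le_trans hts2 hx.1
          have hxpos : 0 < x := by linarith
          rw [Real.norm_eq_abs, abs_of_nonneg (by positivity)]
          rw [hKdef]
          have : x ^ (2*H-1) ≤ (T/2) ^ (2*H-1) :=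
            Real.rpow_le_rpow_of_nonpos (by linarith) hx2 (by linarith)
          exact mul_le_mul_of_nonneg_left this (by linarith)
        have hseg := norm_image_sub_le_of_norm_deriv_le_segment' hmvt hbound p.2
          ⟨by linarith, le_refl _⟩
        have : ‖C p‖ = ‖p.2 ^ (2*H) - (p.2 - p.1) ^ (2*H)‖ := by
          rw [hCdef]; exact norm_sub_rev _ _
        rw [this]
        calc ‖p.2 ^ (2*H) - (p.2 - p.1) ^ (2*H)‖ ≤ K * (p.2 - (p.2 - p.1)) := hseg
          _ = K * p.1 := by ring_nf
      have hCw : ‖C p / w p‖ = ‖C p‖ / w p := by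
        rw [Real.norm_eq_abs, Real.norm_eq_abs, abs_div, abs_of_pos hw]
      rw [hCw]
      rcases eq_or_lt_of_le hs0 with h0 | h0
      · have hC0 : C p = 0 := by simp only [hCdef, ← h0]; simp
        rw [hC0, norm_zero, zero_div]
        exact mul_nonneg hK0 (Real.rpow_nonneg hs0 _)
      · have hvpos : 0 < p.1 ^ (2*H) := Real.rpow_pos_of_pos h0 _
        have hvw : p.1 ^ (2*H) ≤ w p := by
          simp only [hwdef]; linarith
        calc ‖C p‖ / w p ≤ (K * p.1) / p.1 ^ (2*H) :=
              div_le_div₀ (mul_nonneg hK0 h0.le) hCb hvpos hvw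
          _ = K * p.1 ^ (1 - 2*H) := by
              rw [Real.rpow_sub h0, Real.rpow_one, mul_div_assoc]
    · -- tendsto of the bound
      have h12 : 0 < 1 - 2*H := by linarith
      have := (Real.continuousAt_rpow_const 0 (1-2*H) (Or.inr h12.le)).tendsto.comp hs
      have h0 : Tendsto (fun p : ℝ × ℝ => p.1 ^ (1 - 2*H)) l (𝓝 0) := by
        simpa [Function.comp_def, Real.zero_rpow h12.ne'] using this
      simpa using h0.const_mul K
  -- term Q : quadratic remainder
  have hQt : Tendsto (fun p => Q p / w p) l (𝓝 0) := by
    set M : ℝ := H * T⁻¹ + ((γ - γ^2)/2) * T ^ (-(2*H)) with hMdef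
    have hc1 : 0 ≤ H * T⁻¹ := by positivity
    have hγγ : 0 < γ - γ^2 := by nlinarith
    have hc2 : 0 ≤ ((γ - γ^2)/2) * T ^ (-(2*H)) := by positivity
    apply squeeze_zero_norm' (a := fun p : ℝ × ℝ => M^2 * w p)
    · filter_upwards [hmem, hwpos] with p hp hw
      obtain ⟨⟨hs0, hst, htT⟩, _⟩ := hp
      have hu0 : 0 ≤ T - p.2 := by linarith
      have hv0 : 0 ≤ p.1 ^ (2*H) := Real.rpow_nonneg hs0 _
      have huw : T - p.2 ≤ w p := le_add_of_nonneg_right hv0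
      have hvw : p.1 ^ (2*H) ≤ w p := le_add_of_nonneg_left hu0
      have hQ0 : 0 ≤ Q p := by simp only [hQdef]; positivity
      have hlin : H * T⁻¹ * (T - p.2) + ((γ - γ^2)/2) * T ^ (-(2*H)) * p.1 ^ (2*H) ≤ M * w p := by
        rw [hMdef]
        have h1 : H * T⁻¹ * (T - p.2) ≤ H * T⁻¹ * w p := by gcongr
        have h2 : ((γ - γ^2)/2) * T ^ (-(2*H)) * p.1 ^ (2*H)
            ≤ ((γ - γ^2)/2) * T ^ (-(2*H)) * w p := by gcongr
        calc H * T⁻¹ * (T - p.2) + ((γ - γ^2)/2) * T ^ (-(2*H)) * p.1 ^ (2*H)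
            ≤ H * T⁻¹ * w p + ((γ - γ^2)/2) * T ^ (-(2*H)) * w p := add_le_add h1 h2
          _ = (H * T⁻¹ + ((γ - γ^2)/2) * T ^ (-(2*H))) * w p := by ring
      have hlin0 : 0 ≤ H * T⁻¹ * (T - p.2) + ((γ - γ^2)/2) * T ^ (-(2*H)) * p.1 ^ (2*H) :=
        add_nonneg (mul_nonneg hc1 hu0) (mul_nonneg hc2 hv0)
      have hQle : Q p ≤ M^2 * w p * w p := by
        simp only [hQdef]
        calc (H * T⁻¹ * (T - p.2) + ((γ - γ^2)/2) * T ^ (-(2*H)) * p.1 ^ (2*H))^2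
            ≤ (M * w p)^2 := pow_le_pow_left₀ hlin0 hlin 2
          _ = M^2 * w p * w p := by ring
      rw [Real.norm_eq_abs, abs_div, abs_of_nonneg hQ0, abs_of_pos hw, div_le_iff₀ hw]
      exact hQle
    · simpa using hw0.const_mul (M^2)
  -- combine: (F - L²)/w → 0
  have hmain : Tendsto (fun p => (F p - (L p)^2) / w p) l (𝓝 0) := by
    have h0 : Tendsto (fun p => A p / w p + γ * (C p / w p) - T^(2*H) * (Q p / w p)) l
        (𝓝 (0 + γ * 0 - T^(2*H) * 0)) := (hA.add (hC.const_mul γ)).sub (hQt.const_mul _)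
    have : (0:ℝ) + γ * 0 - T^(2*H) * 0 = 0 := by ring
    rw [this] at h0
    apply h0.congr
    intro p
    rw [hid p]
    ring
  -- assemble the final limit
  have hfin : Tendsto (fun p : ℝ × ℝ => ((F p - (L p)^2) / w p) * (VZ H γ p.1 p.2 + L p)⁻¹) l
      (𝓝 (0 * (T^H + T^H)⁻¹)) :=
    hmain.mul (hden.inv₀ (by positivity))
  rw [zero_mul] at hfin
  have hFpos : ∀ᶠ p in l, 0 < F p := hF.eventually_const_lt hPpos
  have hdpos : ∀ᶠ p in l, T^H < VZ H γ p.1 p.2 + L p :=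
    hden.eventually_const_lt (by linarith)
  apply hfin.congr'
  filter_upwards [hFpos, hdpos, hwpos] with p hFp hdp hw
  show (F p - (L p)^2) / w p * (VZ H γ p.1 p.2 + L p)⁻¹
      = (VZ H γ p.1 p.2 - L p) / w p
  have hdne : VZ H γ p.1 p.2 + L p ≠ 0 := ne_of_gt (lt_trans hXpos hdp)
  have hVeq : VZ H γ p.1 p.2 = (F p) ^ ((1:ℝ)/2) := rfl
  have hVsq : (VZ H γ p.1 p.2)^2 = F p := by
    rw [hVeq, ← Real.rpow_natCast ((F p) ^ ((1:ℝ)/2)) 2, ← Real.rpow_mul hFp.le]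
    norm_num
  have hfl : F p - (L p)^2 = (VZ H γ p.1 p.2 - L p) * (VZ H γ p.1 p.2 + L p) := by
    rw [← hVsq]; ring
  rw [hfl]
  field_simp
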